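/- For every natural number m, ∑_{k=0}^{m} (-2)^k · binom(m,k) · H_k / (k+1) equals -(2/(m+1)) · O_{(m+1)/2} if m is odd, and equals 0 if m is even. -/

import Mathlib

open Finset

/-- The `n`-th harmonic number `H_n = 1 + 1/2 + ⋯ + 1/n` (with `H_0 = 0`). -/
noncomputable def H (n : ℕ) : ℝ := ∑ i ∈ Finset.range n, 1 / ((i : ℝ) + 1)

/-- The `r`-th odd harmonic number `O_r = 1 + 1/3 + ⋯ + 1/(2r-1)`. -/
noncomputable def O (r : ℕ) : ℝ := ∑ i ∈ Finset.range r, 1 / (2 * (i : ℝ) + 1)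

lemma H_zero : H 0 = 0 := by simp [H]

lemma H_succ (n : ℕ) : H (n+1) = H n + 1/((n:ℝ)+1) := by
  simp [H, Finset.sum_range_succ]

lemma O_zero : O 0 = 0 := by simp [O]

lemma O_succ (r : ℕ) : O (r+1) = O r + 1/(2*(r:ℝ)+1) := by
  simp [O, Finset.sum_range_succ]

lemma choose_key (n k : ℕ) :
    ((k:ℝ)+1) * (((n+1).choose (k+1) : ℕ) : ℝ) = ((n:ℝ)+1) * ((n.choose k : ℕ) : ℝ) := by
  have h2 : ((n+1) * n.choose k : ℕ) = ((n + 1).choose (k + 1) * (k + 1) : ℕ) :=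
    Nat.add_one_mul_choose_eq n k
  have h3 : (((n+1) * n.choose k : ℕ) : ℝ) = (((n + 1).choose (k + 1) * (k + 1) : ℕ) : ℝ) := by
    exact_mod_cast h2
  push_cast at h3
  linarith

lemma binom_neg2 (n : ℕ) :
    ∑ k ∈ range (n+1), (-2:ℝ)^k * (n.choose k : ℝ) = (-1:ℝ)^n := by
  have h := add_pow (-2 : ℝ) 1 n
  norm_num at h
  rw [← h]

noncomputable def Csum (n : ℕ) : ℝ := ∑ k ∈ range (n+1), (-2:ℝ)^k * (n.choose k : ℝ) / ((k:ℝ)+1)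

lemma Csum_eq (n : ℕ) :
    Csum n = (1 - (-1:ℝ)^(n+1)) / (2*((n:ℝ)+1)) := by
  have hn : ((n:ℝ)+1) ≠ 0 := by positivity
  have hstep : ∀ k ∈ range (n+1), (-2:ℝ)^k * (n.choose k : ℝ) / ((k:ℝ)+1)
      = (-2:ℝ)^k * (((n+1).choose (k+1) : ℕ) : ℝ) / ((n:ℝ)+1) := by
    intro k _
    have hc := choose_key n k
    have hk : ((k:ℝ)+1) ≠ 0 := by positivity
    field_simp
    linear_combination (-1:ℝ) * hc
  rw [Csum, Finset.sum_congr rfl hstep]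
  have hb := binom_neg2 (n+1)
  rw [Finset.sum_range_succ'] at hb
  simp only [pow_zero, Nat.choose_zero_right, Nat.cast_one, mul_one, pow_succ] at hb
  set S := ∑ k ∈ range (n+1), (-2:ℝ)^k * (((n+1).choose (k+1) : ℕ) : ℝ) with hS
  have hmul : (-2:ℝ) * S = ∑ k ∈ range (n+1), (-2:ℝ)^k * (-2) * (((n+1).choose (k+1) : ℕ) : ℝ) := by
    rw [hS, Finset.mul_sum]
    apply Finset.sum_congr rfl
    intro k _
    ring
  have hpow : (-1:ℝ)^(n+1) = (-1:ℝ)^n * -1 := by rw [pow_succ]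
  have h4 : (-2:ℝ) * S + 1 = (-1:ℝ)^(n+1) := by
    rw [hmul, hpow]
    linarith [hb]
  have hsum : S = (1 - (-1:ℝ)^(n+1)) / 2 := by linarith
  rw [← Finset.sum_div, ← hS, hsum, div_div]

noncomputable def A (n : ℕ) : ℝ := ∑ k ∈ range (n+1), (-2:ℝ)^k * (n.choose k : ℝ) * H k

noncomputable def T (n : ℕ) : ℝ := ∑ j ∈ range (n+1), (-2:ℝ)^j * (n.choose j : ℝ) * H (j-1)

lemma A_rec (n : ℕ) : A (n+1) = -A n - 2 * Csum n := by
  have expand : A (n+1) = ∑ k ∈ range (n+1),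
      (-2:ℝ)^(k+1) * ((n.choose k : ℝ) + (n.choose (k+1) : ℝ)) * (H k + 1/((k:ℝ)+1)) := by
    rw [A, Finset.sum_range_succ']
    simp only [pow_zero, Nat.choose_zero_right, Nat.cast_one, one_mul, H_zero, mul_zero, add_zero]
    apply Finset.sum_congr rfl
    intro k _
    rw [Nat.choose_succ_succ, H_succ]
    push_cast
    ring
  have split : A (n+1) = (-2) * A n + (-2) * Csum n
      + ∑ k ∈ range (n+1), (-2:ℝ)^(k+1) * (n.choose (k+1) : ℝ) * H (k+1) := by
    rw [expand, A, Csum]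
    rw [Finset.mul_sum, Finset.mul_sum, ← Finset.sum_add_distrib, ← Finset.sum_add_distrib]
    apply Finset.sum_congr rfl
    intro k _
    rw [H_succ]
    ring
  have tail : ∑ k ∈ range (n+1), (-2:ℝ)^(k+1) * (n.choose (k+1) : ℝ) * H (k+1) = A n := by
    have h2 : ∑ j ∈ range (n+2), (-2:ℝ)^j * (n.choose j : ℝ) * H j
        = ∑ k ∈ range (n+1), (-2:ℝ)^(k+1) * (n.choose (k+1) : ℝ) * H (k+1)
          + (-2:ℝ)^0 * (n.choose 0 : ℝ) * H 0 := Finset.sum_range_succ' _ _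
    have h3 : ∑ j ∈ range (n+2), (-2:ℝ)^j * (n.choose j : ℝ) * H j = A n := by
      rw [Finset.sum_range_succ, A]
      simp [Nat.choose_succ_self]
    rw [h3] at h2
    simp only [H_zero, mul_zero, add_zero] at h2
    linarith
  rw [split, tail]; ring

lemma T_rec (n : ℕ) : T (n+1) = T n - 2 * A n := by
  have expand : T (n+1) = ∑ k ∈ range (n+1),
      (-2:ℝ)^(k+1) * ((n.choose k : ℝ) + (n.choose (k+1) : ℝ)) * H k := by
    rw [T, Finset.sum_range_succ']
    simp only [Nat.zero_sub, pow_zero, Nat.choose_zero_right, Nat.cast_one, one_mul, H_zero,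
      mul_zero, add_zero]
    apply Finset.sum_congr rfl
    intro k _
    rw [Nat.choose_succ_succ, Nat.add_sub_cancel]
    push_cast
    ring
  have split : T (n+1) = (-2) * A n
      + ∑ k ∈ range (n+1), (-2:ℝ)^(k+1) * (n.choose (k+1) : ℝ) * H k := by
    rw [expand, A]
    rw [Finset.mul_sum, ← Finset.sum_add_distrib]
    apply Finset.sum_congr rfl
    intro k _
    ring
  have tail : ∑ k ∈ range (n+1), (-2:ℝ)^(k+1) * (n.choose (k+1) : ℝ) * H k = T n := by
    have h2 : ∑ j ∈ range (n+2), (-2:ℝ)^j * (n.choose j : ℝ) * H (j-1)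
        = ∑ k ∈ range (n+1), (-2:ℝ)^(k+1) * (n.choose (k+1) : ℝ) * H ((k+1)-1)
          + (-2:ℝ)^0 * (n.choose 0 : ℝ) * H (0-1) := Finset.sum_range_succ' _ _
    have h3 : ∑ j ∈ range (n+2), (-2:ℝ)^j * (n.choose j : ℝ) * H (j-1) = T n := by
      rw [Finset.sum_range_succ, T]
      simp [Nat.choose_succ_self]
    rw [h3] at h2
    simp only [Nat.add_sub_cancel, Nat.zero_sub, H_zero, mul_zero, add_zero] at h2
    linarith
  rw [split, tail]; ring

lemma A_closed (n : ℕ) : A n = 2 * (-1:ℝ)^n * O ((n+1)/2) := by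
  induction n with
  | zero => simp [A, H_zero, O_zero]
  | succ n ih =>
    rw [A_rec, ih, Csum_eq]
    rcases Nat.even_or_odd n with ⟨r, rfl⟩ | ⟨r, rfl⟩
    · have h1 : (r + r + 1) / 2 = r := by omega
      have h2 : (r + r + 1 + 1) / 2 = r + 1 := by omega
      have e1 : (-1:ℝ)^(r+r) = 1 := Even.neg_one_pow ⟨r, rfl⟩
      have e2 : (-1:ℝ)^(r+r+1) = -1 := by rw [pow_succ, e1]; ring
      rw [h1, h2, e1, e2, O_succ]
      have hr : (2*(r:ℝ)+1) ≠ 0 := by positivity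
      have hc : (((r+r : ℕ):ℝ) + 1) = 2*(r:ℝ)+1 := by push_cast; ring
      rw [hc]
      field_simp
      ring
    · have h1 : (2*r + 1 + 1) / 2 = r + 1 := by omega
      have h2 : (2*r + 1 + 1 + 1) / 2 = r + 1 := by omega
      have e1 : (-1:ℝ)^(2*r+1) = -1 := Odd.neg_one_pow ⟨r, rfl⟩
      have e2 : (-1:ℝ)^(2*r+1+1) = 1 := by rw [pow_succ, e1]; ring
      rw [h1, h2, e1, e2]
      ring

lemma T_closed (n : ℕ) : T n = (2 + 2*(-1:ℝ)^n) * O ((n+1)/2) := by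
  induction n with
  | zero => simp [T, H_zero, O_zero]
  | succ n ih =>
    rw [T_rec, ih, A_closed]
    rcases Nat.even_or_odd n with ⟨r, rfl⟩ | ⟨r, rfl⟩
    · have h1 : (r + r + 1) / 2 = r := by omega
      have h2 : (r + r + 1 + 1) / 2 = r + 1 := by omega
      have e1 : (-1:ℝ)^(r+r) = 1 := Even.neg_one_pow ⟨r, rfl⟩
      have e2 : (-1:ℝ)^(r+r+1) = -1 := by rw [pow_succ, e1]; ring
      rw [h1, h2, e1, e2]
      ring
    · have h1 : (2*r + 1 + 1) / 2 = r + 1 := by omega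
      have h2 : (2*r + 1 + 1 + 1) / 2 = r + 1 := by omega
      have e1 : (-1:ℝ)^(2*r+1) = -1 := Odd.neg_one_pow ⟨r, rfl⟩
      have e2 : (-1:ℝ)^(2*r+1+1) = 1 := by rw [pow_succ, e1]; ring
      rw [h1, h2, e1, e2]
      ring

/-- The main Corollary of the paper. -/
theorem stmt_3 (m : ℕ) :
    ∑ k ∈ Finset.range (m + 1), (-2 : ℝ) ^ k * (m.choose k : ℝ) * H k / ((k : ℝ) + 1)
    = if Odd m then -(2 / ((m : ℝ) + 1)) * O ((m + 1) / 2) else 0 := by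
  have hm : ((m:ℝ)+1) ≠ 0 := by positivity
  have hT : T (m+1) = ∑ k ∈ range (m+1), (-2:ℝ)^(k+1) * (((m+1).choose (k+1) : ℕ) : ℝ) * H k := by
    rw [T, Finset.sum_range_succ']
    simp [H_zero]
  have key : ∑ k ∈ Finset.range (m + 1), (-2 : ℝ) ^ k * (m.choose k : ℝ) * H k / ((k : ℝ) + 1)
      = T (m+1) / (-2 * ((m:ℝ)+1)) := by
    rw [hT, Finset.sum_div]
    apply Finset.sum_congr rfl
    intro k _
    have hc := choose_key m k
    have hk : ((k:ℝ)+1) ≠ 0 := by positivity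
    have hne : (-2 : ℝ) * ((m:ℝ)+1) ≠ 0 := by
      intro h; apply hm; linarith [mul_eq_zero.mp h]
    field_simp
    linear_combination (-2 * (-2:ℝ)^k * H k) * hc
  rw [key, T_closed]
  rcases Nat.even_or_odd m with ⟨r, rfl⟩ | ⟨r, rfl⟩
  · have hodd : ¬ Odd (r + r) := Nat.not_odd_iff_even.mpr ⟨r, rfl⟩
    rw [if_neg hodd]
    have e2 : (-1:ℝ)^(r+r+1) = -1 := by
      rw [pow_succ, Even.neg_one_pow ⟨r, rfl⟩]; ring
    rw [e2]
    ring
  · have hodd : Odd (2*r+1) := ⟨r, rfl⟩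
    rw [if_pos hodd]
    have h1 : (2*r + 1 + 1 + 1) / 2 = r + 1 := by omega
    have h2 : (2*r + 1 + 1) / 2 = r + 1 := by omega
    have e2 : (-1:ℝ)^(2*r+1+1) = 1 := by
      rw [pow_succ, Odd.neg_one_pow ⟨r, rfl⟩]; ring
    rw [h1, h2, e2]
    have hr : ((2*r+1 : ℕ):ℝ) + 1 ≠ 0 := by positivity
    field_simp
    ring
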